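/- arXiv:2105.13438 — 9 statements merged into one kernel-verified Lean document; each statement's English description precedes it below -/
import Mathlib

section
/- If G is a k-regular graph with no isolated vertex (so k ≥ 1), then ∂_{2p}(G) = (k-1)·ρ(G), where ρ(G) is the maximum cardinality of a 2-packing of G. -/
open Finset

variable {V : Type*}

/-- `S` is a 2-packing: closed neighbourhoods of distinct vertices of `S` are disjoint. -/
def IsPacking2 (G : SimpleGraph V) (S : Finset V) : Prop :=
  (S : Set V).Pairwise fun u v =>
    Disjoint (G.neighborSet u ∪ {u}) (G.neighborSet v ∪ {v})

/-- The external neighbourhood of `S`: vertices outside `S` with a neighbour in `S`. -/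
def extN (G : SimpleGraph V) [Fintype V] [DecidableEq V] [DecidableRel G.Adj]
    (S : Finset V) : Finset V :=
  Finset.univ.filter fun v => v ∉ S ∧ ∃ u ∈ S, G.Adj u v

/-- The differential of a set `S`: `|N_e(S)| - |S|`. -/
def diffSet (G : SimpleGraph V) [Fintype V] [DecidableEq V] [DecidableRel G.Adj]
    (S : Finset V) : ℤ :=
  ((extN G S).card : ℤ) - S.card

/-- The 2-packing differential of `G`. -/
noncomputable def pdiff2 (G : SimpleGraph V) [Fintype V] [DecidableEq V]
    [DecidableRel G.Adj] : ℤ :=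
  sSup {d : ℤ | ∃ S : Finset V, IsPacking2 G S ∧ d = diffSet G S}

/-- The packing number of `G`: maximum cardinality of a 2-packing. -/
noncomputable def packNum (G : SimpleGraph V) [Fintype V] : ℕ :=
  sSup {n : ℕ | ∃ S : Finset V, IsPacking2 G S ∧ n = S.card}

/-- `G` has no isolated vertex. -/
def NoIsolated (G : SimpleGraph V) : Prop := ∀ v : V, ∃ u, G.Adj v u

/-- `S` is a dominating set of `G`. -/
def IsDom (G : SimpleGraph V) (S : Finset V) : Prop :=
  ∀ v, v ∉ S → ∃ u ∈ S, G.Adj u v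

lemma packing_empty (G : SimpleGraph V) : IsPacking2 G (∅ : Finset V) := by
  simp [IsPacking2]

lemma extN_eq (G : SimpleGraph V) [Fintype V] [DecidableEq V] [DecidableRel G.Adj]
    {S : Finset V} (hS : IsPacking2 G S) :
    extN G S = S.biUnion fun u => G.neighborFinset u := by
  ext v
  simp only [extN, mem_filter, mem_univ, true_and, mem_biUnion,
    SimpleGraph.mem_neighborFinset]
  constructor
  · rintro ⟨-, u, hu, hadj⟩; exact ⟨u, hu, hadj⟩
  · rintro ⟨u, hu, hadj⟩
    refine ⟨fun hv => ?_, u, hu, hadj⟩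
    rcases eq_or_ne u v with rfl | hne
    · exact G.irrefl hadj
    · have hd := hS hu hv hne
      exact (Set.disjoint_left.mp hd (Set.mem_union_left _ hadj))
        (Set.mem_union_right _ rfl)

lemma card_extN (G : SimpleGraph V) [Fintype V] [DecidableEq V] [DecidableRel G.Adj]
    {S : Finset V} (hS : IsPacking2 G S) {k : ℕ} (hreg : G.IsRegularOfDegree k) :
    (extN G S).card = k * S.card := by
  rw [extN_eq G hS, card_biUnion]
  · simp only [G.card_neighborFinset_eq_degree]
    rw [Finset.sum_congr rfl (fun u _ => hreg u), Finset.sum_const, smul_eq_mul,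
      mul_comm]
  · intro u hu v hv hne
    have hd := hS hu hv hne
    show Disjoint (G.neighborFinset u) (G.neighborFinset v)
    rw [← Finset.disjoint_coe]
    simp only [SimpleGraph.neighborFinset_def, Set.coe_toFinset]
    exact hd.mono Set.subset_union_left Set.subset_union_left

lemma diff_eq (G : SimpleGraph V) [Fintype V] [DecidableEq V] [DecidableRel G.Adj]
    {S : Finset V} (hS : IsPacking2 G S) {k : ℕ} (hreg : G.IsRegularOfDegree k) :
    diffSet G S = ((k : ℤ) - 1) * S.card := by
  unfold diffSet
  rw [card_extN G hS hreg]
  push_cast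
  ring

theorem stmt1 {V : Type*} [Fintype V] [DecidableEq V] (G : SimpleGraph V)
    [DecidableRel G.Adj] (k : ℕ) (hreg : G.IsRegularOfDegree k) (h : NoIsolated G) :
    pdiff2 G = ((k : ℤ) - 1) * packNum G := by
  set N : Set ℕ := {n : ℕ | ∃ S : Finset V, IsPacking2 G S ∧ n = S.card} with hN
  set D : Set ℤ := {d : ℤ | ∃ S : Finset V, IsPacking2 G S ∧ d = diffSet G S} with hD
  have hNne : N.Nonempty := ⟨0, ∅, packing_empty G, by simp⟩
  have hNbdd : BddAbove N := ⟨Fintype.card V, by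
    rintro n ⟨S, -, rfl⟩; exact S.card_le_univ⟩
  have hmem := Nat.sSup_mem hNne hNbdd
  obtain ⟨S₀, hS₀, hcard⟩ := hmem
  have hpack : packNum G = sSup N := rfl
  cases isEmpty_or_nonempty V with
  | inl hV =>
    have hsub : ∀ S : Finset V, S = ∅ := fun S => Finset.eq_empty_of_isEmpty S
    have hDe : D = {0} := by
      ext d
      constructor
      · rintro ⟨S, -, rfl⟩
        rw [hsub S]
        simp [diffSet, extN]
      · rintro rfl
        exact ⟨∅, packing_empty G, by simp [diffSet, extN]⟩
    have hNe : N = {0} := by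
      ext n
      constructor
      · rintro ⟨S, -, rfl⟩; rw [hsub S]; simp
      · rintro rfl; exact ⟨∅, packing_empty G, by simp⟩
    show sSup D = ((k : ℤ) - 1) * (sSup N : ℕ)
    rw [hDe, hNe, csSup_singleton]
    simp
  | inr hV =>
    have hk : 1 ≤ k := by
      obtain ⟨v⟩ := hV
      obtain ⟨u, hu⟩ := h v
      have : 0 < G.degree v := by
        rw [G.degree_pos_iff_exists_adj]
        exact ⟨u, hu⟩
      rw [hreg v] at this
      omega
    have hk' : (0 : ℤ) ≤ (k : ℤ) - 1 := by
      have : (1 : ℤ) ≤ (k : ℤ) := by exact_mod_cast hk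
      omega
    have hDbound : ∀ d ∈ D, d ≤ ((k : ℤ) - 1) * (sSup N : ℕ) := by
      rintro d ⟨S, hS, rfl⟩
      rw [diff_eq G hS hreg]
      have hle : S.card ≤ sSup N := le_csSup hNbdd ⟨S, hS, rfl⟩
      exact mul_le_mul_of_nonneg_left (by exact_mod_cast hle) hk'
    have hmemD : ((k : ℤ) - 1) * (sSup N : ℕ) ∈ D := by
      refine ⟨S₀, hS₀, ?_⟩
      rw [diff_eq G hS₀ hreg, hcard]
    show sSup D = ((k : ℤ) - 1) * (sSup N : ℕ)
    refine le_antisymm (csSup_le ⟨_, hmemD⟩ hDbound) ?_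
    exact le_csSup ⟨_, hDbound⟩ hmemD
end

section
/- If G is an efficient closed domination graph with no isolated vertex, then ∂_{2p}(G) ≥ n(G) - 2ρ(G). -/
open Finset

variable {V : Type*}

theorem stmt8 {V : Type*} [Fintype V] [DecidableEq V] (G : SimpleGraph V)
    [DecidableRel G.Adj] (h : NoIsolated G)
    (heff : ∃ S : Finset V, IsPacking2 G S ∧ IsDom G S) :
    (Fintype.card V : ℤ) - 2 * packNum G ≤ pdiff2 G := by
  obtain ⟨S, hP, hD⟩ := heff
  have hext : extN G S = Finset.univ \ S := by
    ext v
    simp only [extN, Finset.mem_filter, Finset.mem_sdiff, Finset.mem_univ, true_and]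
    exact ⟨fun h => h.1, fun h => ⟨h, hD v h⟩⟩
  have hcard : (extN G S).card = Fintype.card V - S.card := by
    rw [hext, Finset.card_sdiff_of_subset (Finset.subset_univ S), Finset.card_univ]
  have hle : (S.card : ℤ) ≤ Fintype.card V := by
    exact_mod_cast Finset.card_le_univ S
  have hdiff : diffSet G S = (Fintype.card V : ℤ) - 2 * S.card := by
    rw [diffSet, hcard]
    push_cast [Finset.card_le_univ S]
    ring
  have hpack : (S.card : ℤ) ≤ packNum G := by
    have : S.card ≤ packNum G := by
      apply le_csSup
      · exact ⟨Fintype.card V, fun n ⟨T, _, hn⟩ => hn ▸ Finset.card_le_univ T⟩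
      · exact ⟨S, hP, rfl⟩
    exact_mod_cast this
  have h1 : diffSet G S ≤ pdiff2 G := by
    apply le_csSup
    · refine ⟨Fintype.card V, fun d ⟨T, _, hd⟩ => ?_⟩
      rw [hd, diffSet]
      have : ((extN G T).card : ℤ) ≤ Fintype.card V := by
        exact_mod_cast Finset.card_le_univ (extN G T)
      omega
    · exact ⟨S, hP, rfl⟩
  rw [hdiff] at h1
  omega
end

section
/- If G is an efficient closed domination graph with no isolated vertex and there exists a maximum 2-packing S such that every vertex outside S has degree δ(G), then ∂_{2p}(G) = n(G) - 2ρ(G). -/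
open Finset

variable {V : Type*}

section aux
variable [Fintype V] [DecidableEq V] (G : SimpleGraph V) [DecidableRel G.Adj]

lemma extN_eq_biUnion {S : Finset V} (hS : IsPacking2 G S) :
    extN G S = S.biUnion (fun u => G.neighborFinset u) := by
  ext v
  simp only [extN, mem_filter, mem_univ, true_and, mem_biUnion,
    SimpleGraph.mem_neighborFinset]
  constructor
  · rintro ⟨-, u, hu, hadj⟩; exact ⟨u, hu, hadj⟩
  · rintro ⟨u, hu, hadj⟩
    refine ⟨fun hv => ?_, u, hu, hadj⟩
    exact Set.disjoint_left.mp (hS hu hv hadj.ne)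
      (Set.mem_union_left _ hadj) (Set.mem_union_right _ rfl)

lemma card_extN_s9 {S : Finset V} (hS : IsPacking2 G S) :
    (extN G S).card = ∑ u ∈ S, G.degree u := by
  rw [extN_eq_biUnion G hS, card_biUnion]
  · rfl
  · intro u hu v hv huv
    have hd := hS hu hv huv
    have h2 : Disjoint (G.neighborSet u) (G.neighborSet v) :=
      hd.mono Set.subset_union_left Set.subset_union_left
    rw [Function.onFun, Finset.disjoint_left]
    intro a ha hb
    exact Set.disjoint_left.mp h2 (by simpa using ha) (by simpa using hb)

lemma extN_subset (S : Finset V) : extN G S ⊆ univ \ S := by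
  intro v hv
  simp only [extN, mem_filter, mem_univ, true_and] at hv
  simp [hv.1]

lemma extN_of_dom {S : Finset V} (hD : IsDom G S) : extN G S = univ \ S := by
  refine subset_antisymm (extN_subset G S) ?_
  intro v hv
  rw [mem_sdiff] at hv
  simp only [extN, mem_filter, mem_univ, true_and]
  exact ⟨hv.2, hD v hv.2⟩

lemma pack_card_le {S D : Finset V} (hS : IsPacking2 G S) (hD : IsDom G D) :
    S.card ≤ D.card := by
  classical
  have hch : ∀ s : V, ∃ d : V, s ∈ S → d ∈ D ∧ d ∈ G.neighborSet s ∪ {s} := by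
    intro s
    by_cases h : s ∈ D
    · exact ⟨s, fun _ => ⟨h, Set.mem_union_right _ rfl⟩⟩
    · obtain ⟨d, hd, hadj⟩ := hD s h
      exact ⟨d, fun _ => ⟨hd, Set.mem_union_left _ hadj.symm⟩⟩
  choose f hf using hch
  refine Finset.card_le_card_of_injOn f (fun s hs => (hf s hs).1) ?_
  intro s hsmem t htmem hst
  by_contra hne
  exact Set.disjoint_left.mp (hS hsmem htmem hne)
    ((hf s hsmem).2) (hst ▸ (hf t htmem).2)

lemma packNum_eq_card {D : Finset V} (hDp : IsPacking2 G D) (hD : IsDom G D) :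
    packNum G = D.card := by
  have hg : IsGreatest {n : ℕ | ∃ S : Finset V, IsPacking2 G S ∧ n = S.card} D.card := by
    constructor
    · exact ⟨D, hDp, rfl⟩
    · rintro n ⟨S, hSp, rfl⟩
      exact pack_card_le G hSp hD
  exact hg.csSup_eq

end aux

theorem stmt9 {V : Type*} [Fintype V] [DecidableEq V] (G : SimpleGraph V)
    [DecidableRel G.Adj] (h : NoIsolated G)
    (heff : ∃ S : Finset V, IsPacking2 G S ∧ IsDom G S)
    (hS : ∃ S : Finset V, IsPacking2 G S ∧ S.card = packNum G ∧
      ∀ v, v ∉ S → G.degree v = G.minDegree) :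
    pdiff2 G = (Fintype.card V : ℤ) - 2 * packNum G := by
  classical
  obtain ⟨D, hDp, hDd⟩ := heff
  obtain ⟨S₀, hS₀p, hS₀c, hS₀deg⟩ := hS
  have hρ : packNum G = D.card := packNum_eq_card G hDp hDd
  -- every vertex has degree ≥ 1
  have hdeg1 : ∀ v : V, 1 ≤ G.degree v := by
    intro v
    obtain ⟨u, hu⟩ := h v
    have : u ∈ G.neighborFinset v := by
      rw [SimpleGraph.mem_neighborFinset]; exact hu
    exact Finset.card_pos.mpr ⟨u, this⟩
  -- the value of the differential at D
  have hDval : diffSet G D = (Fintype.card V : ℤ) - 2 * D.card := by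
    unfold diffSet
    rw [extN_of_dom G hDd, Finset.card_sdiff_of_subset (Finset.subset_univ D), Finset.card_univ]
    have := Finset.card_le_univ D
    push_cast [Nat.cast_sub this]
    ring
  -- n ≥ 2 * |D|
  have hn2 : 2 * (D.card : ℤ) ≤ (Fintype.card V : ℤ) := by
    have h1 : (extN G D).card = ∑ u ∈ D, G.degree u := card_extN_s9 G hDp
    have h2 : D.card ≤ ∑ u ∈ D, G.degree u := by
      calc D.card = ∑ _u ∈ D, 1 := by simp
        _ ≤ ∑ u ∈ D, G.degree u := Finset.sum_le_sum fun u _ => hdeg1 u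
    have h3 : (extN G D).card + D.card ≤ Fintype.card V := by
      have := Finset.card_le_card (extN_subset G D)
      rw [Finset.card_sdiff_of_subset (Finset.subset_univ D), Finset.card_univ] at this
      omega
    omega
  -- the upper bound for arbitrary 2-packings
  have hub : ∀ S : Finset V, IsPacking2 G S →
      diffSet G S ≤ (Fintype.card V : ℤ) - 2 * D.card := by
    intro S hSp
    rcases S.eq_empty_or_nonempty with rfl | hne
    · have : diffSet G ∅ = 0 := by
        simp [diffSet, extN]
      rw [this]; linarith
    · -- V is nonempty, so minDegree ≥ 1
      have : Nonempty V := ⟨hne.choose⟩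
      have hδ1 : 1 ≤ G.minDegree := by
        obtain ⟨v, hv⟩ := G.exists_minimal_degree_vertex
        rw [hv]; exact hdeg1 v
      set δ := G.minDegree with hδ
      -- notation
      set A := S ∩ S₀ with hA
      set B := S \ S₀ with hB
      have hcardAB : A.card + B.card = S.card := Finset.card_inter_add_card_sdiff S S₀
      have hsumAB : (∑ u ∈ A, G.degree u) + ∑ u ∈ B, G.degree u = ∑ u ∈ S, G.degree u :=
        Finset.sum_inter_add_sum_sdiff S S₀ _
      have hsumS₀ : (∑ u ∈ S₀ ∩ S, G.degree u) + ∑ u ∈ S₀ \ S, G.degree u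
          = ∑ u ∈ S₀, G.degree u := Finset.sum_inter_add_sum_sdiff S₀ S _
      have hcardS₀ : (S₀ ∩ S).card + (S₀ \ S).card = S₀.card :=
        Finset.card_inter_add_card_sdiff S₀ S
      have hAcomm : S₀ ∩ S = A := Finset.inter_comm S₀ S
      -- sum over B: all degrees equal δ
      have hBsum : ∑ u ∈ B, G.degree u = B.card * δ := by
        rw [Finset.sum_congr rfl fun u hu => hS₀deg u (Finset.mem_sdiff.mp hu).2]
        simp [mul_comm, hB]
      -- sum over S₀ \ S : degrees ≥ δ
      have hS₀Bsum : (S₀ \ S).card * δ ≤ ∑ u ∈ S₀ \ S, G.degree u := by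
        calc (S₀ \ S).card * δ = ∑ _u ∈ S₀ \ S, δ := by simp [mul_comm]
          _ ≤ ∑ u ∈ S₀ \ S, G.degree u :=
            Finset.sum_le_sum fun u _ => G.minDegree_le_degree u
      -- sum over S₀ is at most n - |S₀|
      have hS₀sum : (∑ u ∈ S₀, G.degree u) + S₀.card ≤ Fintype.card V := by
        have h1 := Finset.card_le_card (extN_subset G S₀)
        rw [Finset.card_sdiff_of_subset (Finset.subset_univ S₀), Finset.card_univ,
          card_extN_s9 G hS₀p] at h1
        omega
      -- |S| ≤ ρ = |S₀| = |D|
      have hScard : S.card ≤ D.card := pack_card_le G hSp hDd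
      have hS₀card : S₀.card = D.card := by rw [hS₀c, hρ]
      -- now the arithmetic
      have hdval : diffSet G S = ((∑ u ∈ S, G.degree u : ℕ) : ℤ) - S.card := by
        rw [diffSet, card_extN_s9 G hSp]
      rw [hdval]
      have key : (1 : ℤ) * ((D.card : ℤ) - S.card) ≤ (δ : ℤ) * ((D.card : ℤ) - S.card) := by
        apply mul_le_mul_of_nonneg_right
        · exact_mod_cast hδ1
        · have : (S.card : ℤ) ≤ D.card := by exact_mod_cast hScard
          linarith
      rw [hAcomm] at hsumS₀
      -- cast everything
      have c1 : ((∑ u ∈ A, G.degree u : ℕ) : ℤ) + (∑ u ∈ B, G.degree u : ℕ)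
          = (∑ u ∈ S, G.degree u : ℕ) := by exact_mod_cast hsumAB
      have c2 : ((∑ u ∈ A, G.degree u : ℕ) : ℤ) + (∑ u ∈ S₀ \ S, G.degree u : ℕ)
          = (∑ u ∈ S₀, G.degree u : ℕ) := by exact_mod_cast hsumS₀
      have c3 : ((∑ u ∈ B, G.degree u : ℕ) : ℤ) = (B.card : ℤ) * δ := by
        exact_mod_cast hBsum
      have c4 : ((S₀ \ S).card : ℤ) * δ ≤ ((∑ u ∈ S₀ \ S, G.degree u : ℕ) : ℤ) := by
        exact_mod_cast hS₀Bsum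
      have c5 : ((∑ u ∈ S₀, G.degree u : ℕ) : ℤ) + S₀.card ≤ (Fintype.card V : ℤ) := by
        exact_mod_cast hS₀sum
      have c6 : ((A.card : ℤ)) + B.card = S.card := by exact_mod_cast hcardAB
      have c7 : ((A.card : ℤ)) + (S₀ \ S).card = S₀.card := by
        have : (S₀ ∩ S).card + (S₀ \ S).card = S₀.card := hcardS₀
        rw [hAcomm] at this
        exact_mod_cast this
      have c8 : ((S₀.card : ℤ)) = D.card := by exact_mod_cast hS₀card
      have e1 : ((∑ u ∈ B, G.degree u : ℕ) : ℤ)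
          = (S.card : ℤ) * δ - (A.card : ℤ) * δ := by
        rw [c3, show (B.card : ℤ) = (S.card : ℤ) - A.card by linarith]; ring
      have e2 : ((D.card : ℤ)) * δ - (A.card : ℤ) * δ
          ≤ ((∑ u ∈ S₀ \ S, G.degree u : ℕ) : ℤ) := by
        have : ((S₀ \ S).card : ℤ) = (D.card : ℤ) - A.card := by linarith
        rw [this] at c4; linarith [c4]
      linarith [key, c1, c2, c5, c6, c8, e1, e2]
  -- conclude
  have hg : IsGreatest {d : ℤ | ∃ S : Finset V, IsPacking2 G S ∧ d = diffSet G S}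
      ((Fintype.card V : ℤ) - 2 * D.card) := by
    constructor
    · exact ⟨D, hDp, hDval.symm⟩
    · rintro d ⟨S, hSp, rfl⟩
      exact hub S hSp
  rw [pdiff2, hg.csSup_eq, hρ]
end

section
/- For any efficient closed domination graph G with minimum degree δ(G) ≥ 1, the packing number satisfies ρ(G) ≥ ⌈(n(G)·(δ(G)+1) - 2m(G))/(δ(G)+1)⌉. -/
open Finset

variable {V : Type*}

theorem stmt10 {V : Type*} [Fintype V] [DecidableEq V] (G : SimpleGraph V)
    [DecidableRel G.Adj] (hδ : 1 ≤ G.minDegree)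
    (heff : ∃ S : Finset V, IsPacking2 G S ∧ IsDom G S) :
    (⌈(((Fintype.card V : ℤ) * ((G.minDegree : ℤ) + 1)
        - 2 * G.edgeFinset.card : ℤ) : ℚ) / ((G.minDegree : ℚ) + 1)⌉ : ℤ)
      ≤ (packNum G : ℤ) := by
  obtain ⟨S, hpack, hdom⟩ := heff
  -- packNum ≥ S.card
  have hbdd : BddAbove {n : ℕ | ∃ S : Finset V, IsPacking2 G S ∧ n = S.card} := by
    refine ⟨Fintype.card V, ?_⟩
    rintro x ⟨T, -, rfl⟩
    exact T.card_le_univ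
  have hle : S.card ≤ packNum G := le_csSup hbdd ⟨S, hpack, rfl⟩
  -- Sᶜ ⊆ union of neighborhoods of S
  have hsub : Sᶜ ⊆ S.biUnion (fun u => G.neighborFinset u) := by
    intro v hv
    obtain ⟨u, hu, hadj⟩ := hdom v (Finset.mem_compl.mp hv)
    exact Finset.mem_biUnion.mpr ⟨u, hu, (G.mem_neighborFinset u v).mpr hadj⟩
  have h1 : Sᶜ.card ≤ ∑ u ∈ S, G.degree u :=
    le_trans (Finset.card_le_card hsub) (Finset.card_biUnion_le)
  have h2 : Sᶜ.card * G.minDegree ≤ ∑ v ∈ Sᶜ, G.degree v := by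
    simpa [smul_eq_mul] using Finset.card_nsmul_le_sum Sᶜ (fun v => G.degree v)
      G.minDegree (fun v _ => G.minDegree_le_degree v)
  have hsplit : ∑ v ∈ Sᶜ, G.degree v + ∑ u ∈ S, G.degree u = ∑ v, G.degree v := by
    rw [Finset.sum_compl_add_sum]
  have h2m : ∑ v, G.degree v = 2 * G.edgeFinset.card := by
    simpa using G.sum_degrees_eq_twice_card_edges
  have hkey : Sᶜ.card * (G.minDegree + 1) ≤ 2 * G.edgeFinset.card := by
    calc Sᶜ.card * (G.minDegree + 1) = Sᶜ.card * G.minDegree + Sᶜ.card := by ring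
      _ ≤ ∑ v ∈ Sᶜ, G.degree v + ∑ u ∈ S, G.degree u := Nat.add_le_add h2 h1
      _ = 2 * G.edgeFinset.card := by rw [hsplit, h2m]
  have hcard : Sᶜ.card + S.card = Fintype.card V := S.card_compl_add_card
  have hnat : Fintype.card V * (G.minDegree + 1)
      ≤ 2 * G.edgeFinset.card + S.card * (G.minDegree + 1) := by
    calc Fintype.card V * (G.minDegree + 1)
        = Sᶜ.card * (G.minDegree + 1) + S.card * (G.minDegree + 1) := by
          rw [← hcard]; ring
      _ ≤ 2 * G.edgeFinset.card + S.card * (G.minDegree + 1) :=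
          Nat.add_le_add_right hkey _
  have hceil : (⌈(((Fintype.card V : ℤ) * ((G.minDegree : ℤ) + 1)
        - 2 * G.edgeFinset.card : ℤ) : ℚ) / ((G.minDegree : ℚ) + 1)⌉ : ℤ)
      ≤ (S.card : ℤ) := by
    rw [Int.ceil_le]
    rw [div_le_iff₀ (by positivity : (0:ℚ) < (G.minDegree : ℚ) + 1)]
    have hq : ((Fintype.card V : ℚ)) * ((G.minDegree : ℚ) + 1)
        ≤ 2 * (G.edgeFinset.card : ℚ) + (S.card : ℚ) * ((G.minDegree : ℚ) + 1) := by
      exact_mod_cast hnat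
    push_cast
    linarith
  calc _ ≤ (S.card : ℤ) := hceil
    _ ≤ (packNum G : ℤ) := by exact_mod_cast hle
end

section
/- For any graph G with no isolated vertex, Δ(G) - 1 ≤ ∂_{2p}(G) ≤ (Δ(G) - 1)·(n(G) - i(G))/Δ(G), where i(G) is the independent domination number. -/
open Finset

variable {V : Type*}

/-- The independent domination number of `G`. -/
noncomputable def indepDomNum (G : SimpleGraph V) [Fintype V] : ℕ :=
  sInf {n : ℕ | ∃ S : Finset V,
    (∀ u ∈ S, ∀ v ∈ S, ¬ G.Adj u v) ∧ IsDom G S ∧ n = S.card}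

-- auxiliary lemmas

/-- A 2-packing is independent. -/
lemma packing_indep {G : SimpleGraph V} {S : Finset V} (hS : IsPacking2 G S) :
    ∀ u ∈ S, ∀ v ∈ S, ¬ G.Adj u v := by
  intro u hu v hv hadj
  rcases eq_or_ne u v with rfl | hne
  · exact G.irrefl hadj
  · exact Set.disjoint_left.mp (hS hu hv hne) (Or.inl hadj) (Or.inr rfl)

/-- There is an independent dominating set containing any independent set, avoiding its
external neighbourhood. -/
lemma exists_indep_dom (G : SimpleGraph V) [Fintype V] [DecidableEq V] [DecidableRel G.Adj]
    (S : Finset V) (hind : ∀ u ∈ S, ∀ v ∈ S, ¬ G.Adj u v) :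
    ∃ I : Finset V, S ⊆ I ∧ (∀ u ∈ I, ∀ v ∈ I, ¬ G.Adj u v) ∧ IsDom G I := by
  classical
  set 𝒞 : Finset (Finset V) :=
    univ.filter (fun I => S ⊆ I ∧ ∀ u ∈ I, ∀ v ∈ I, ¬ G.Adj u v) with h𝒞
  have hSmem : S ∈ 𝒞 := by
    simp only [h𝒞, mem_filter, mem_univ, true_and]
    exact ⟨Finset.Subset.refl S, hind⟩
  obtain ⟨I, hI, hmax⟩ := 𝒞.exists_max_image Finset.card ⟨S, hSmem⟩
  simp only [h𝒞, mem_filter, mem_univ, true_and] at hI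
  refine ⟨I, hI.1, hI.2, ?_⟩
  intro v hv
  by_contra hcon
  push_neg at hcon
  have hins : insert v I ∈ 𝒞 := by
    simp only [h𝒞, mem_filter, mem_univ, true_and]
    refine ⟨hI.1.trans (subset_insert _ _), ?_⟩
    intro a ha b hb hadj
    rcases mem_insert.1 ha with ha' | ha'
    · rcases mem_insert.1 hb with hb' | hb'
      · subst ha'; subst hb'; exact G.irrefl hadj
      · subst ha'; exact hcon b hb' hadj.symm
    · rcases mem_insert.1 hb with hb' | hb'
      · subst hb'; exact hcon a ha' hadj
      · exact hI.2 a ha' b hb' hadj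
  have := hmax _ hins
  rw [Finset.card_insert_of_notMem hv] at this
  omega

theorem stmt11 {V : Type*} [Fintype V] [DecidableEq V] (G : SimpleGraph V)
    [DecidableRel G.Adj] (h : NoIsolated G) :
    (G.maxDegree : ℤ) - 1 ≤ pdiff2 G ∧
      (pdiff2 G : ℚ) ≤ ((G.maxDegree : ℚ) - 1)
        * ((Fintype.card V : ℚ) - indepDomNum G) / (G.maxDegree : ℚ) := by
  classical
  set D := {d : ℤ | ∃ S : Finset V, IsPacking2 G S ∧ d = diffSet G S} with hD
  have hne : D.Nonempty := ⟨diffSet G ∅, ∅, by simp [IsPacking2], rfl⟩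
  have hbdd : BddAbove D := by
    refine ⟨(Fintype.card V : ℤ), ?_⟩
    rintro d ⟨S, -, rfl⟩
    have h1 : (extN G S).card ≤ Fintype.card V := Finset.card_le_univ _
    have : (0:ℤ) ≤ S.card := Int.natCast_nonneg _
    simp only [diffSet]
    omega
  have hpd : pdiff2 G = sSup D := rfl
  have hsup_mem : pdiff2 G ∈ D := hpd ▸ Int.csSup_mem hne hbdd
  -- lower bound
  have hlow : (G.maxDegree : ℤ) - 1 ≤ pdiff2 G := by
    rcases isEmpty_or_nonempty V with hV | hV
    · have h0 : G.maxDegree = 0 := by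
        simp only [SimpleGraph.maxDegree, Finset.univ_eq_empty, Finset.image_empty,
          Finset.max_empty]
        rfl
      have h0' : (0:ℤ) ∈ D := ⟨∅, by simp [IsPacking2], by simp [diffSet, extN]⟩
      have h2 := le_csSup hbdd h0'
      rw [h0, hpd]
      omega
    · obtain ⟨v, hv⟩ := G.exists_maximal_degree_vertex
      have hmem : ((G.degree v : ℤ) - 1) ∈ D := by
        refine ⟨{v}, ?_, ?_⟩
        · intro a ha b hb hab
          simp only [coe_singleton, Set.mem_singleton_iff] at ha hb
          exact absurd (ha.trans hb.symm) hab
        · have : extN G {v} = G.neighborFinset v := by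
            ext w
            simp only [extN, mem_filter, mem_univ, true_and, mem_singleton,
              SimpleGraph.mem_neighborFinset]
            constructor
            · rintro ⟨-, u, rfl, hadj⟩; exact hadj
            · intro hadj
              refine ⟨fun hw => ?_, v, rfl, hadj⟩
              subst hw
              exact G.irrefl hadj
          simp [diffSet, this]
      have h2 := le_csSup hbdd hmem
      rw [hv, hpd]
      omega
  refine ⟨hlow, ?_⟩
  -- upper bound
  obtain ⟨S, hS, hEq⟩ := hsup_mem
  rcases Nat.eq_zero_or_pos G.maxDegree with hΔ | hΔ
  · -- max degree zero: V is empty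
    have hVempty : IsEmpty V := by
      by_contra hV
      rw [not_isEmpty_iff] at hV
      obtain ⟨v⟩ := hV
      obtain ⟨u, hu⟩ := h v
      have h1 : 1 ≤ G.degree v := by
        rw [← SimpleGraph.card_neighborFinset_eq_degree]
        exact Finset.card_pos.2 ⟨u, by simp [hu]⟩
      have := G.degree_le_maxDegree v
      omega
    have hS0 : S = ∅ := Finset.eq_empty_of_isEmpty S
    have : pdiff2 G = 0 := by rw [hEq, hS0]; simp [diffSet, extN]
    rw [this, hΔ]
    simp
  · -- Δ ≥ 1
    set Δ : ℕ := G.maxDegree with hΔdef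
    set n : ℕ := Fintype.card V
    set i : ℕ := indepDomNum G
    -- (b) |Ne| ≤ Δ * |S|
    have hb : (extN G S).card ≤ Δ * S.card := by
      have hsub : extN G S ⊆ S.biUnion (fun u => G.neighborFinset u) := by
        intro w hw
        simp only [extN, mem_filter, mem_univ, true_and] at hw
        obtain ⟨-, u, hu, hadj⟩ := hw
        exact Finset.mem_biUnion.2 ⟨u, hu, by simp [hadj]⟩
      calc (extN G S).card ≤ (S.biUnion (fun u => G.neighborFinset u)).card :=
            Finset.card_le_card hsub
        _ ≤ ∑ u ∈ S, (G.neighborFinset u).card := Finset.card_biUnion_le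
        _ ≤ ∑ u ∈ S, Δ := Finset.sum_le_sum (fun u _ => by
            rw [SimpleGraph.card_neighborFinset_eq_degree]; exact G.degree_le_maxDegree u)
        _ = S.card * Δ := by rw [Finset.sum_const, smul_eq_mul]
        _ = Δ * S.card := Nat.mul_comm _ _
    -- (a) i + |Ne| ≤ n
    have ha : i + (extN G S).card ≤ n := by
      obtain ⟨I, hSI, hIind, hIdom⟩ := exists_indep_dom G S (packing_indep hS)
      have hile : i ≤ I.card := Nat.sInf_le ⟨I, hIind, hIdom, rfl⟩
      have hdisj : Disjoint I (extN G S) := by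
        rw [Finset.disjoint_left]
        intro w hwI hwE
        simp only [extN, mem_filter, mem_univ, true_and] at hwE
        obtain ⟨-, u, hu, hadj⟩ := hwE
        exact hIind u (hSI hu) w hwI hadj
      have := Finset.card_union_of_disjoint hdisj ▸ Finset.card_le_univ (I ∪ extN G S)
      calc i + (extN G S).card ≤ I.card + (extN G S).card := by omega
        _ = (I ∪ extN G S).card := (Finset.card_union_of_disjoint hdisj).symm
        _ ≤ n := Finset.card_le_univ _
    -- combine in ℤ
    have hkey : (Δ : ℤ) * diffSet G S ≤ ((Δ : ℤ) - 1) * ((n : ℤ) - i) := by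
      have hNe : ((extN G S).card : ℤ) ≤ (n : ℤ) - (i : ℤ) := by omega
      have hb' : ((extN G S).card : ℤ) ≤ (Δ : ℤ) * S.card := by exact_mod_cast hb
      have hΔ1 : (1:ℤ) ≤ (Δ:ℤ) := by exact_mod_cast hΔ
      have : (Δ : ℤ) * diffSet G S ≤ ((Δ : ℤ) - 1) * ((extN G S).card : ℤ) := by
        simp only [diffSet]
        nlinarith
      refine this.trans ?_
      have : (0:ℤ) ≤ (Δ:ℤ) - 1 := by omega
      exact mul_le_mul_of_nonneg_left hNe this
    -- to ℚ
    have hΔQ : (0:ℚ) < (Δ : ℚ) := by exact_mod_cast hΔ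
    rw [le_div_iff₀ hΔQ, hEq, mul_comm]
    have h3 : (((Δ : ℤ) * diffSet G S : ℤ) : ℚ) ≤ ((((Δ : ℤ) - 1) * ((n : ℤ) - (i : ℤ)) : ℤ) : ℚ) := by
      exact_mod_cast hkey
    push_cast at h3 ⊢
    linarith
end

section
/- Let G be a graph with no isolated vertex. If k ∈ {1,2,3} and Δ(G) = n(G) - k, then ∂_{2p}(G) = n(G) - k - 1. -/
open Finset

variable {V : Type*}

theorem stmt14 {V : Type*} [Fintype V] [DecidableEq V] (G : SimpleGraph V)
    [DecidableRel G.Adj] (h : NoIsolated G) (k : ℕ) (hk : k ∈ ({1, 2, 3} : Set ℕ))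
    (hΔ : (G.maxDegree : ℤ) = (Fintype.card V : ℤ) - k) :
    pdiff2 G = (Fintype.card V : ℤ) - k - 1 := by
  have hk13 : k = 1 ∨ k = 2 ∨ k = 3 := by simpa using hk
  have hk1 : 1 ≤ k := by omega
  have hk3 : k ≤ 3 := by omega
  -- V is nonempty
  have hne : Nonempty V := by
    by_contra hc
    rw [not_nonempty_iff] at hc
    have h1 : Fintype.card V = 0 := Fintype.card_eq_zero
    have h2 : G.maxDegree = 0 := by
      apply Nat.le_antisymm _ (Nat.zero_le _)
      apply SimpleGraph.maxDegree_le_of_forall_degree_le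
      intro v; exact (hc.false v).elim
    rw [h1, h2] at hΔ
    have : (k : ℤ) = 0 := by omega
    omega
  -- max degree ≥ 1
  have hΔ1 : 1 ≤ G.maxDegree := by
    obtain ⟨v⟩ := hne
    obtain ⟨u, hu⟩ := h v
    have : 1 ≤ G.degree v := by
      rw [Nat.one_le_iff_ne_zero, ← Nat.pos_iff_ne_zero, ← SimpleGraph.card_neighborFinset_eq_degree]
      exact Finset.card_pos.mpr ⟨u, (SimpleGraph.mem_neighborFinset G v u).mpr hu⟩
    exact this.trans (G.degree_le_maxDegree v)
  have hnk : (k : ℤ) + 1 ≤ Fintype.card V := by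
    have : (1 : ℤ) ≤ G.maxDegree := by exact_mod_cast hΔ1
    omega
  set T : Set ℤ := {d : ℤ | ∃ S : Finset V, IsPacking2 G S ∧ d = diffSet G S} with hT
  -- every element of T is ≤ (Fintype.card V : ℤ) - k - 1
  have hub : ∀ d ∈ T, d ≤ (Fintype.card V : ℤ) - k - 1 := by
    rintro d ⟨S, hS, rfl⟩
    rcases Nat.lt_or_ge S.card 2 with hc | hc
    · interval_cases hSc : S.card
      · -- S empty
        have hSe : S = ∅ := Finset.card_eq_zero.mp hSc
        subst hSe
        have : extN G (∅ : Finset V) = ∅ := by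
          ext w; simp [extN]
        simp [diffSet, this]
        omega
      · -- S singleton
        obtain ⟨u, rfl⟩ := Finset.card_eq_one.mp hSc
        have hext : extN G ({u} : Finset V) = G.neighborFinset u := by
          ext w
          simp only [extN, Finset.mem_filter, Finset.mem_univ, true_and,
            Finset.mem_singleton, SimpleGraph.mem_neighborFinset]
          constructor
          · rintro ⟨-, x, rfl, hadj⟩; exact hadj
          · intro hadj
            exact ⟨fun hw => G.loopless.irrefl u (hw ▸ hadj), u, rfl, hadj⟩
        have hdeg : G.degree u ≤ G.maxDegree := G.degree_le_maxDegree u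
        have : ((extN G ({u} : Finset V)).card : ℤ) ≤ (Fintype.card V : ℤ) - k := by
          rw [hext, SimpleGraph.card_neighborFinset_eq_degree, ← hΔ]
          exact_mod_cast hdeg
        simp only [diffSet, Finset.card_singleton]
        omega
    · -- |S| ≥ 2
      have hsub : extN G S ⊆ Sᶜ := by
        intro w hw
        simp only [extN, Finset.mem_filter] at hw
        simp [Finset.mem_compl, hw.2.1]
      have hcard : (extN G S).card ≤ Fintype.card V - S.card := by
        calc (extN G S).card ≤ Sᶜ.card := Finset.card_le_card hsub
        _ = Fintype.card V - S.card := Finset.card_compl S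
      have hScard : S.card ≤ Fintype.card V := Finset.card_le_univ S
      simp only [diffSet]
      omega
  have hTne : T.Nonempty := ⟨0, ∅, by simp [IsPacking2], by simp [diffSet, extN]⟩
  have hbdd : BddAbove T := ⟨(Fintype.card V : ℤ) - k - 1, hub⟩
  -- the value (Fintype.card V : ℤ) - k - 1 is attained
  obtain ⟨v, hv⟩ := G.exists_maximal_degree_vertex
  have hmem : (Fintype.card V : ℤ) - k - 1 ∈ T := by
    refine ⟨{v}, by rw [IsPacking2, Finset.coe_singleton]; exact Set.pairwise_singleton _ _, ?_⟩
    have hext : extN G ({v} : Finset V) = G.neighborFinset v := by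
      ext w
      simp only [extN, Finset.mem_filter, Finset.mem_univ, true_and,
        Finset.mem_singleton, SimpleGraph.mem_neighborFinset]
      constructor
      · rintro ⟨-, x, rfl, hadj⟩; exact hadj
      · intro hadj
        exact ⟨fun hw => G.loopless.irrefl v (hw ▸ hadj), v, rfl, hadj⟩
    simp only [diffSet, hext, SimpleGraph.card_neighborFinset_eq_degree,
      Finset.card_singleton, ← hv, hΔ]
    ring
  rw [pdiff2, ← hT]
  exact le_antisymm (csSup_le hTne hub) (le_csSup hbdd hmem)
end

section
/- Let G be a graph with no isolated vertex and Δ(G) ≤ n(G) - 4. Then ∂_{2p}(G) ≤ n(G) - 4, with equality if and only if G has a dominating set of cardinality 2 which is a 2-packing. -/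
open Finset

variable {V : Type*}

section Aux
variable [Fintype V] [DecidableEq V] (G : SimpleGraph V) [DecidableRel G.Adj]

lemma extN_subset_compl (S : Finset V) : extN G S ⊆ Sᶜ := by
  intro v hv
  simp only [extN, mem_filter] at hv
  simpa using hv.2.1

lemma extN_empty : extN G (∅ : Finset V) = ∅ := by
  ext v; simp [extN]

lemma extN_singleton_subset (u : V) : extN G {u} ⊆ G.neighborFinset u := by
  intro v hv
  simp only [extN, mem_filter, mem_singleton] at hv
  obtain ⟨-, -, w, hw, hadj⟩ := hv
  rw [SimpleGraph.mem_neighborFinset]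
  exact hw ▸ hadj

lemma diffSet_le (hΔ : (G.maxDegree : ℤ) ≤ (Fintype.card V : ℤ) - 4)
    (S : Finset V) : diffSet G S ≤ (Fintype.card V : ℤ) - 4 := by
  have hd0 : (0 : ℤ) ≤ G.maxDegree := Int.natCast_nonneg _
  rcases Nat.lt_or_ge S.card 2 with hc | hc
  · interval_cases hcard : S.card
    · have hS : S = ∅ := Finset.card_eq_zero.mp hcard
      subst hS
      simp only [diffSet, extN_empty, card_empty]
      push_cast
      linarith
    · obtain ⟨u, rfl⟩ := Finset.card_eq_one.mp hcard
      have h1 : (extN G {u}).card ≤ G.degree u :=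
        Finset.card_le_card (extN_singleton_subset G u)
      have h2 : G.degree u ≤ G.maxDegree := G.degree_le_maxDegree u
      have h3 : ((extN G {u}).card : ℤ) ≤ G.maxDegree := by exact_mod_cast h1.trans h2
      simp only [diffSet, card_singleton]
      push_cast
      linarith
  · have h1 : (extN G S).card ≤ Sᶜ.card := Finset.card_le_card (extN_subset_compl G S)
    have h2 : Sᶜ.card = Fintype.card V - S.card := Finset.card_compl S
    have h3 : S.card ≤ Fintype.card V := S.card_le_univ
    simp only [diffSet]
    omega

lemma diffSet_eq_aux (h : NoIsolated G)
    (hΔ : (G.maxDegree : ℤ) ≤ (Fintype.card V : ℤ) - 4)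
    (S : Finset V) (heq : diffSet G S = (Fintype.card V : ℤ) - 4) :
    S.card = 2 ∧ extN G S = Sᶜ := by
  have h1 : (extN G S).card ≤ Sᶜ.card := Finset.card_le_card (extN_subset_compl G S)
  have h2 : Sᶜ.card = Fintype.card V - S.card := Finset.card_compl S
  have h3 : S.card ≤ Fintype.card V := S.card_le_univ
  -- rule out small cards
  have hc2 : S.card = 2 := by
    rcases Nat.lt_or_ge S.card 2 with hc | hc
    · exfalso
      interval_cases hcard : S.card
      · have hS : S = ∅ := Finset.card_eq_zero.mp hcard
        subst hS
        simp only [diffSet, extN_empty, card_empty] at heq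
        have hn4 : Fintype.card V = 4 := by push_cast at heq; omega
        have hpos : 0 < Fintype.card V := by omega
        obtain ⟨v⟩ := Fintype.card_pos_iff.mp hpos
        obtain ⟨u, hu⟩ := h v
        have hdeg : 0 < G.degree v := by
          rw [G.degree_pos_iff_exists_adj]; exact ⟨u, hu⟩
        have hle : G.degree v ≤ G.maxDegree := G.degree_le_maxDegree v
        rw [hn4] at hΔ
        omega
      · obtain ⟨u, rfl⟩ := Finset.card_eq_one.mp hcard
        have ha : (extN G {u}).card ≤ G.degree u :=
          Finset.card_le_card (extN_singleton_subset G u)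
        have hb : G.degree u ≤ G.maxDegree := G.degree_le_maxDegree u
        have h3' : ((extN G {u}).card : ℤ) ≤ G.maxDegree := by exact_mod_cast ha.trans hb
        simp only [diffSet, card_singleton] at heq
        push_cast at heq
        linarith
    · rcases Nat.lt_or_ge S.card 3 with hc3 | hc3
      · omega
      · exfalso
        simp only [diffSet] at heq
        omega
  refine ⟨hc2, ?_⟩
  apply Finset.eq_of_subset_of_card_le (extN_subset_compl G S)
  simp only [diffSet, hc2] at heq
  omega

lemma pdiff_bdd : BddAbove {d : ℤ | ∃ S : Finset V, IsPacking2 G S ∧ d = diffSet G S} := by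
  have hsub : {d : ℤ | ∃ S : Finset V, IsPacking2 G S ∧ d = diffSet G S} ⊆
      Set.range (diffSet G) := by
    rintro d ⟨S, -, rfl⟩; exact ⟨S, rfl⟩
  exact ((Set.finite_range _).subset hsub).bddAbove

lemma pdiff_nonemp :
    {d : ℤ | ∃ S : Finset V, IsPacking2 G S ∧ d = diffSet G S}.Nonempty :=
  ⟨diffSet G ∅, ∅, by simp [IsPacking2], rfl⟩

lemma pdiff_finite :
    {d : ℤ | ∃ S : Finset V, IsPacking2 G S ∧ d = diffSet G S}.Finite := by
  apply (Set.finite_range (diffSet G)).subset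
  rintro d ⟨S, -, rfl⟩; exact ⟨S, rfl⟩

end Aux

theorem stmt15 {V : Type*} [Fintype V] [DecidableEq V] (G : SimpleGraph V)
    [DecidableRel G.Adj] (h : NoIsolated G)
    (hΔ : (G.maxDegree : ℤ) ≤ (Fintype.card V : ℤ) - 4) :
    pdiff2 G ≤ (Fintype.card V : ℤ) - 4 ∧
      (pdiff2 G = (Fintype.card V : ℤ) - 4 ↔
        ∃ S : Finset V, IsPacking2 G S ∧ IsDom G S ∧ S.card = 2) := by
  set T := {d : ℤ | ∃ S : Finset V, IsPacking2 G S ∧ d = diffSet G S} with hT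
  have hub : ∀ d ∈ T, d ≤ (Fintype.card V : ℤ) - 4 := by
    rintro d ⟨S, -, rfl⟩
    exact diffSet_le G hΔ S
  have hle : pdiff2 G ≤ (Fintype.card V : ℤ) - 4 :=
    csSup_le (pdiff_nonemp G) hub
  refine ⟨hle, ?_, ?_⟩
  · intro heq
    have hmem : sSup T ∈ T := (pdiff_nonemp G).csSup_mem (pdiff_finite G)
    rw [hT] at hmem
    obtain ⟨S, hpack, hd⟩ := hmem
    have hd' : diffSet G S = (Fintype.card V : ℤ) - 4 := by
      rw [← hd]
      exact heq
    obtain ⟨hc2, hext⟩ := diffSet_eq_aux G h hΔ S hd'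
    refine ⟨S, hpack, ?_, hc2⟩
    intro v hv
    have : v ∈ extN G S := by rw [hext]; simpa using hv
    simp only [extN, mem_filter] at this
    exact this.2.2
  · rintro ⟨S, hpack, hdom, hc2⟩
    have hext : extN G S = Sᶜ := by
      apply Finset.Subset.antisymm (extN_subset_compl G S)
      intro v hv
      rw [Finset.mem_compl] at hv
      simp only [extN, mem_filter, mem_univ, true_and]
      exact ⟨hv, hdom v hv⟩
    have hd : diffSet G S = (Fintype.card V : ℤ) - 4 := by
      have h3 : S.card ≤ Fintype.card V := S.card_le_univ
      have h4 : 4 ≤ Fintype.card V := by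
        have hd0 : (0 : ℤ) ≤ G.maxDegree := Int.natCast_nonneg _
        omega
      simp only [diffSet, hext, Finset.card_compl, hc2]
      omega
    have hge : (Fintype.card V : ℤ) - 4 ≤ pdiff2 G := by
      apply le_csSup (pdiff_bdd G)
      exact ⟨S, hpack, hd.symm⟩
    exact le_antisymm hle hge
end

section
/- For any graph G, the unique response Roman domination number and the 2-packing differential satisfy the Gallai-type identity μ_R(G) + ∂_{2p}(G) = n(G). -/
open Finset

variable {V : Type*}

/-- `f` is a unique response Roman dominating function on `G`. -/
def IsURRDF (G : SimpleGraph V) (f : V → Fin 3) : Prop :=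
  (∀ v, f v = 0 → ∃! u, G.Adj u v ∧ f u = 2) ∧
    (∀ v, f v ≠ 0 → ∀ u, G.Adj u v → f u ≠ 2)

/-- The unique response Roman domination number of `G`. -/
noncomputable def urrdNum (G : SimpleGraph V) [Fintype V] : ℕ :=
  sInf {w : ℕ | ∃ f : V → Fin 3, IsURRDF G f ∧ w = ∑ v : V, (f v).val}
section Aux

variable [Fintype V] [DecidableEq V] (G : SimpleGraph V) [DecidableRel G.Adj]

lemma sum_ite_key (S T : Finset V) (hT : ∀ v ∈ T, v ∉ S) :
    ∑ v : V, (if v ∈ S then (2:ℤ) else if v ∈ T then 0 else 1) =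
      (Fintype.card V : ℤ) - (((T.card : ℤ) - S.card)) := by
  classical
  rw [← Finset.sum_filter_add_sum_filter_not Finset.univ (· ∈ S)]
  have h1 : Finset.univ.filter (· ∈ S) = S := by simp
  have h2 : ∑ v ∈ Finset.univ.filter (¬ · ∈ S),
      (if v ∈ S then (2:ℤ) else if v ∈ T then 0 else 1)
      = ∑ v ∈ Finset.univ.filter (¬ · ∈ S), ((1:ℤ) - if v ∈ T then 1 else 0) := by
    apply Finset.sum_congr rfl
    intro v hv
    simp only [Finset.mem_filter] at hv
    rw [if_neg hv.2]
    by_cases h : v ∈ T <;> simp [h]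
  have h0 : ∑ v ∈ S, (if v ∈ S then (2:ℤ) else if v ∈ T then 0 else 1) = 2 * S.card := by
    rw [Finset.sum_congr rfl (fun v hv => if_pos hv), Finset.sum_const]
    ring
  rw [h1, h0, h2, Finset.sum_sub_distrib, Finset.sum_const, Finset.sum_ite_mem]
  have h3 : Finset.univ.filter (¬ · ∈ S) ∩ T = T := by
    apply Finset.inter_eq_right.mpr
    intro v hv
    simp [hT v hv]
  have h4 : Finset.univ.filter (¬ · ∈ S) = Finset.univ \ S := by
    ext x; simp
  have h5 : S.card ≤ Fintype.card V := by
    simpa using Finset.card_le_card (Finset.subset_univ S)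
  rw [h3, h4, Finset.card_sdiff_of_subset (Finset.subset_univ S), Finset.card_univ]
  simp only [Finset.sum_const, nsmul_eq_mul, mul_one, Nat.cast_sub h5]
  ring

lemma packing_to_urrdf (S : Finset V) (hS : IsPacking2 G S) :
    ∃ f : V → Fin 3, IsURRDF G f ∧
      (∑ v : V, ((f v).val : ℤ)) = (Fintype.card V : ℤ) - diffSet G S := by
  classical
  refine ⟨fun v => if v ∈ S then 2 else if v ∈ extN G S then 0 else 1, ?_, ?_⟩
  · constructor
    · intro v hv
      have hvS : v ∉ S := by
        intro h; simp [h] at hv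
      have hvT : v ∈ extN G S := by
        by_contra h; simp [hvS, h] at hv
      obtain ⟨-, u, huS, huv⟩ := (Finset.mem_filter.mp hvT).2.imp id id
      · refine ⟨u, ⟨huv, by simp [huS]⟩, ?_⟩
        rintro u' ⟨hu'v, hu'2⟩
        have hu'S : u' ∈ S := by
          by_contra h
          by_cases h' : u' ∈ extN G S <;> simp [h, h'] at hu'2
        by_contra hne
        have := hS (by simpa using hu'S) (by simpa using huS) hne
        exact Set.disjoint_left.mp this (Set.mem_union_left _ hu'v)
          (Set.mem_union_left _ huv)
    · intro v hv u huv hu2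
      have huS : u ∈ S := by
        by_contra h
        by_cases h' : u ∈ extN G S <;> simp [h, h'] at hu2
      by_cases hvS : v ∈ S
      · rcases eq_or_ne u v with rfl | hne
        · exact G.irrefl huv
        · have := hS (by simpa using huS) (by simpa using hvS) hne
          exact Set.disjoint_left.mp this (Set.mem_union_left _ huv)
            (Set.mem_union_right _ rfl)
      · have : v ∈ extN G S := by
          simp only [extN, Finset.mem_filter, Finset.mem_univ, true_and]
          exact ⟨hvS, u, huS, huv⟩
        simp [hvS, this] at hv
  · have hT : ∀ v ∈ extN G S, v ∉ S := by
      intro v hv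
      exact ((Finset.mem_filter.mp hv).2).1
    have := sum_ite_key S (extN G S) hT
    rw [diffSet]
    rw [show (∑ v : V, (((if v ∈ S then 2 else if v ∈ extN G S then 0 else 1 : Fin 3)).val : ℤ)) =
        ∑ v : V, (if v ∈ S then (2:ℤ) else if v ∈ extN G S then 0 else 1) from
      Finset.sum_congr rfl (fun v _ => by
        by_cases h1 : v ∈ S
        · simp [h1]
        · by_cases h2 : v ∈ extN G S <;> simp [h1, h2]), this]

lemma urrdf_to_packing (f : V → Fin 3) (hf : IsURRDF G f) :
    ∃ S : Finset V, IsPacking2 G S ∧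
      (∑ v : V, ((f v).val : ℤ)) = (Fintype.card V : ℤ) - diffSet G S := by
  classical
  set S : Finset V := Finset.univ.filter (fun v => f v = 2) with hSdef
  have hmemS : ∀ v, v ∈ S ↔ f v = 2 := by intro v; simp [hSdef]
  have hpack : IsPacking2 G S := by
    intro u hu v hv hne
    rw [Set.disjoint_left]
    intro w hwu hwv
    simp only [Finset.mem_coe, hmemS] at hu hv
    simp only [Set.mem_union, SimpleGraph.mem_neighborSet, Set.mem_singleton_iff] at hwu hwv
    have key : ∀ a b : V, f a = 2 → f b = 2 → G.Adj a b → False := by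
      intro a b ha hb hab
      have hbne : f b ≠ 0 := by rw [hb]; decide
      exact hf.2 b hbne a hab ha
    rcases hwu with hwu | rfl
    · rcases hwv with hwv | rfl
      · by_cases hw0 : f w = 0
        · obtain ⟨u₀, -, huniq⟩ := hf.1 w hw0
          exact hne ((huniq u ⟨hwu, hu⟩).trans (huniq v ⟨hwv, hv⟩).symm)
        · exact hf.2 w hw0 u hwu hu
      · exact key u w hu hv hwu
    · rcases hwv with hwv | h
      · exact key v w hv hu hwv
      · exact hne h
  refine ⟨S, hpack, ?_⟩
  have hext : extN G S = Finset.univ.filter (fun v => f v = 0) := by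
    ext w
    simp only [extN, Finset.mem_filter, Finset.mem_univ, true_and, hmemS]
    constructor
    · rintro ⟨hw2, u, hu2, huw⟩
      by_contra hw0
      exact hf.2 w hw0 u huw hu2
    · intro hw0
      obtain ⟨u, ⟨huw, hu2⟩, -⟩ := hf.1 w hw0
      exact ⟨by rw [hw0]; decide, u, hu2, huw⟩
  have hT : ∀ v ∈ extN G S, v ∉ S := fun v hv => ((Finset.mem_filter.mp hv).2).1
  have hsik := sum_ite_key S (extN G S) hT
  rw [diffSet]
  rw [show (∑ v : V, ((f v).val : ℤ)) =
      ∑ v : V, (if v ∈ S then (2:ℤ) else if v ∈ extN G S then 0 else 1) from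
    Finset.sum_congr rfl (fun v _ => by
      rw [hext]
      simp only [hmemS, Finset.mem_filter, Finset.mem_univ, true_and]
      set a := f v with ha
      clear_value a
      fin_cases a <;> decide), hsik]

end Aux

theorem stmt18 {V : Type*} [Fintype V] [DecidableEq V] (G : SimpleGraph V)
    [DecidableRel G.Adj] :
    (urrdNum G : ℤ) + pdiff2 G = (Fintype.card V : ℤ) := by
  classical
  set W : Set ℕ := {w : ℕ | ∃ f : V → Fin 3, IsURRDF G f ∧ w = ∑ v : V, (f v).val} with hW
  have hone : IsURRDF G (fun _ => (1 : Fin 3)) := by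
    constructor
    · intro v hv
      have h10 : (1 : Fin 3) ≠ 0 := by decide
      exact absurd hv h10
    · intro v _ u _
      show (1 : Fin 3) ≠ 2
      decide
  have hWne : W.Nonempty := ⟨_, fun _ => (1 : Fin 3), hone, rfl⟩
  have hdef : urrdNum G = sInf W := rfl
  have hmem := Nat.sInf_mem hWne
  obtain ⟨f₀, hf₀, hw₀⟩ := hmem
  obtain ⟨S₀, hS₀, hsum₀⟩ := urrdf_to_packing G f₀ hf₀
  have hcast : ((urrdNum G : ℕ) : ℤ) = ∑ v : V, ((f₀ v).val : ℤ) := by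
    rw [hdef, hw₀]; push_cast; rfl
  have key₀ : (urrdNum G : ℤ) = (Fintype.card V : ℤ) - diffSet G S₀ :=
    hcast.trans hsum₀
  -- every element of the diff set is ≤ n - urrdNum
  have hub : ∀ d ∈ {d : ℤ | ∃ S : Finset V, IsPacking2 G S ∧ d = diffSet G S},
      d ≤ (Fintype.card V : ℤ) - urrdNum G := by
    rintro d ⟨S, hS, rfl⟩
    obtain ⟨f, hf, hsum⟩ := packing_to_urrdf G S hS
    have : urrdNum G ≤ ∑ v : V, (f v).val := Nat.sInf_le ⟨f, hf, rfl⟩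
    have h2 : ((urrdNum G : ℕ) : ℤ) ≤ ∑ v : V, ((f v).val : ℤ) := by
      calc ((urrdNum G : ℕ) : ℤ) ≤ ((∑ v : V, (f v).val : ℕ) : ℤ) := by exact_mod_cast this
        _ = ∑ v : V, ((f v).val : ℤ) := by push_cast; rfl
    linarith [hsum ▸ h2]
  have hne : {d : ℤ | ∃ S : Finset V, IsPacking2 G S ∧ d = diffSet G S}.Nonempty :=
    ⟨diffSet G S₀, S₀, hS₀, rfl⟩
  have hbdd : BddAbove {d : ℤ | ∃ S : Finset V, IsPacking2 G S ∧ d = diffSet G S} :=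
    ⟨(Fintype.card V : ℤ) - urrdNum G, hub⟩
  have h1 : pdiff2 G ≤ (Fintype.card V : ℤ) - urrdNum G := csSup_le hne hub
  have h2 : (Fintype.card V : ℤ) - urrdNum G ≤ pdiff2 G := by
    have : diffSet G S₀ ∈ {d : ℤ | ∃ S : Finset V, IsPacking2 G S ∧ d = diffSet G S} :=
      ⟨S₀, hS₀, rfl⟩
    have := le_csSup hbdd this
    rw [pdiff2]
    linarith
  linarith
end

section
/- Let G be a connected graph with at least 2 vertices and H any graph. A set W ⊆ V(G) × V(H) is a 2-packing of the lexicographic product G ∘ H if and only if the projection P_G(W) of W onto V(G) is a 2-packing of G and |W| = |P_G(W)| (i.e., W contains at most one vertex in each fiber). -/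
/-- The lexicographic product of two simple graphs. -/
def lexProd {α β : Type*} (G : SimpleGraph α) (H : SimpleGraph β) :
    SimpleGraph (α × β) where
  Adj p q := G.Adj p.1 q.1 ∨ (p.1 = q.1 ∧ H.Adj p.2 q.2)
  symm := by
    constructor
    rintro p q (h | ⟨h1, h2⟩)
    · exact Or.inl h.symm
    · exact Or.inr ⟨h1.symm, h2.symm⟩
  loopless := by
    constructor
    rintro p (h | ⟨_, h⟩)
    · exact G.irrefl h
    · exact H.irrefl h

/-- `S` is a 2-packing: closed neighbourhoods of distinct vertices of `S` are disjoint. -/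
def IsPacking2Set {V : Type*} (G : SimpleGraph V) (S : Set V) : Prop :=
  S.Pairwise fun u v => Disjoint (G.neighborSet u ∪ {u}) (G.neighborSet v ∪ {v})

theorem stmt19 {α β : Type*} [Fintype α] [Fintype β] (G : SimpleGraph α)
    (H : SimpleGraph β) (hconn : G.Connected) (hcard : 2 ≤ Fintype.card α)
    (W : Set (α × β)) :
    IsPacking2Set (lexProd G H) W ↔
      IsPacking2Set G (Prod.fst '' W) ∧ W.ncard = (Prod.fst '' W).ncard := by
  classical
  have hadj : ∀ u : α, ∃ x, G.Adj u x := by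
    intro u
    obtain ⟨y, hy⟩ := Fintype.exists_ne_of_one_lt_card (by omega) u
    obtain ⟨w⟩ := hconn u y
    cases w with
    | nil => exact absurd rfl hy
    | cons h _ => exact ⟨_, h⟩
  constructor
  · intro hW
    have hinj : Set.InjOn Prod.fst W := by
      rintro ⟨u, v⟩ hp ⟨x, y⟩ hq (h : u = x)
      subst h
      by_contra hne
      have hd := hW hp hq hne
      obtain ⟨z, hz⟩ := hadj u
      have h1 : (z, v) ∈ ((lexProd G H).neighborSet (u, v) ∪ {(u, v)}) :=
        Or.inl (Or.inl hz)
      have h2 : (z, v) ∈ ((lexProd G H).neighborSet (u, y) ∪ {(u, y)}) :=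
        Or.inl (Or.inl hz)
      exact Set.disjoint_left.mp hd h1 h2
    refine ⟨?_, (Set.ncard_image_of_injOn hinj).symm⟩
    rintro a ⟨⟨u, v⟩, hp, rfl⟩ b ⟨⟨x, y⟩, hq, rfl⟩ hne
    have hpq : ((u, v) : α × β) ≠ (x, y) := by
      intro h; exact hne (congrArg Prod.fst h)
    have hd := hW hp hq hpq
    rw [Set.disjoint_left]
    rintro z (hz1 | hz1) (hz2 | hz2)
    · have m1 : ((z, v) : α × β) ∈ ((lexProd G H).neighborSet (u, v) ∪ {(u, v)}) :=
        Or.inl (Or.inl hz1)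
      have m2 : ((z, v) : α × β) ∈ ((lexProd G H).neighborSet (x, y) ∪ {(x, y)}) :=
        Or.inl (Or.inl hz2)
      exact Set.disjoint_left.mp hd m1 m2
    · simp only [Set.mem_singleton_iff] at hz2
      have hz1' : G.Adj u z := hz1
      rw [hz2] at hz1'
      have m1 : ((x, y) : α × β) ∈ ((lexProd G H).neighborSet (u, v) ∪ {(u, v)}) :=
        Or.inl (Or.inl hz1')
      exact Set.disjoint_left.mp hd m1 (Or.inr rfl)
    · simp only [Set.mem_singleton_iff] at hz1
      have hz2' : G.Adj x z := hz2
      rw [hz1] at hz2'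
      have m2 : ((u, v) : α × β) ∈ ((lexProd G H).neighborSet (x, y) ∪ {(x, y)}) :=
        Or.inl (Or.inl hz2')
      exact Set.disjoint_left.mp hd (Or.inr rfl) m2
    · simp only [Set.mem_singleton_iff] at hz1 hz2
      exact hne (hz1.symm.trans hz2)
  · rintro ⟨hpack, hcardW⟩
    have hinj : Set.InjOn Prod.fst W :=
      Set.injOn_of_ncard_image_eq hcardW.symm (Set.toFinite W)
    rintro ⟨u, v⟩ hp ⟨x, y⟩ hq hne
    have hux : u ≠ x := fun h => hne (hinj hp hq h)
    have hd := hpack ⟨(u, v), hp, rfl⟩ ⟨(x, y), hq, rfl⟩ hux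
    rw [Set.disjoint_left]
    rintro ⟨z, b⟩ hz1 hz2
    have e1 : z ∈ G.neighborSet u ∪ {u} := by
      rcases hz1 with (h | ⟨h, _⟩) | h
      · exact Or.inl h
      · exact Or.inr h.symm
      · exact Or.inr (congrArg Prod.fst h)
    have e2 : z ∈ G.neighborSet x ∪ {x} := by
      rcases hz2 with (h | ⟨h, _⟩) | h
      · exact Or.inl h
      · exact Or.inr h.symm
      · exact Or.inr (congrArg Prod.fst h)
    exact Set.disjoint_left.mp hd e1 e2
end
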